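/- Let G = PSL_2(53) and let Q be a Sylow 2-subgroup of G (which has order 4). Then there exists g ∈ G such that every element of the coset gQ has even order. -/

import Mathlib

set_option maxRecDepth 10000

open Matrix Pointwise
open scoped MatrixGroups

namespace ThompsonAux

instance fact53 : Fact (Nat.Prime 53) := ⟨by norm_num⟩

abbrev F : Type := ZMod 53
abbrev SL : Type := Matrix.SpecialLinearGroup (Fin 2) F
abbrev G : Type := Matrix.ProjectiveSpecialLinearGroup (Fin 2) F

instance : DecidableEq SL := fun A B =>
  decidable_of_iff ((A : Matrix (Fin 2) (Fin 2) F) = B) Subtype.ext_iff.symm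

/-- The nontrivial central element `-I` of `SL₂(𝔽₅₃)`. -/
def w : SL := ⟨!![52,0;0,52], by decide⟩

theorem mem_center_iff {A : SL} :
    A ∈ Subgroup.center SL ↔ A = 1 ∨ A = w := by
  rw [Matrix.SpecialLinearGroup.mem_center_iff]
  constructor
  · rintro ⟨r, hr, hA⟩
    have key : ∀ r : F, r ^ 2 = 1 → r = 1 ∨ r = 52 := by decide
    have hr2 : r ^ 2 = 1 := by simpa using hr
    rcases key r hr2 with rfl | rfl
    · left; exact Subtype.ext (by rw [← hA]; decide)
    · right; exact Subtype.ext (by rw [← hA]; decide)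
  · rintro (rfl | rfl)
    · exact ⟨1, by simp⟩
    · exact ⟨52, by simp only [Fintype.card_fin]; decide, by decide⟩

/-- The quotient map `SL₂(𝔽₅₃) → PSL₂(𝔽₅₃)`. -/
def mk : SL →* G := QuotientGroup.mk' (Subgroup.center SL)

theorem mk_eq_one {A : SL} : mk A = 1 ↔ A = 1 ∨ A = w := by
  rw [mk, QuotientGroup.mk'_apply, QuotientGroup.eq_one_iff, mem_center_iff]

theorem mk_eq_mk {A B : SL} : mk A = mk B ↔ A = B ∨ A = B * w := by
  have h1 : mk A = mk B ↔ mk (B⁻¹ * A) = 1 := by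
    rw [_root_.map_mul, _root_.map_inv, inv_mul_eq_one, eq_comm]
  rw [h1, mk_eq_one, inv_mul_eq_one (a := B) (b := A), inv_mul_eq_iff_eq_mul, eq_comm]

def aSL : SL := ⟨!![23,0;0,30], by decide⟩
def bSL : SL := ⟨!![0,1;52,0], by decide⟩
def cSL : SL := ⟨!![0,23;23,0], by decide⟩
def gSL : SL := ⟨!![36,21;1,33], by decide⟩

def x : G := mk aSL
def y : G := mk bSL
def z : G := mk cSL
def g₀ : G := mk gSL

theorem hx2 : x * x = 1 := by rw [x, ← _root_.map_mul, mk_eq_one]; decide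
theorem hy2 : y * y = 1 := by rw [y, ← _root_.map_mul, mk_eq_one]; decide
theorem hz2 : z * z = 1 := by rw [z, ← _root_.map_mul, mk_eq_one]; decide
theorem hxy : x * y = z := by rw [x, y, z, ← _root_.map_mul, mk_eq_mk]; decide
theorem hyx : y * x = z := by rw [x, y, z, ← _root_.map_mul, mk_eq_mk]; decide
theorem hxz : x * z = y := by rw [x, y, z, ← _root_.map_mul, mk_eq_mk]; decide
theorem hzx : z * x = y := by rw [x, y, z, ← _root_.map_mul, mk_eq_mk]; decide
theorem hyz : y * z = x := by rw [x, y, z, ← _root_.map_mul, mk_eq_mk]; decide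
theorem hzy : z * y = x := by rw [x, y, z, ← _root_.map_mul, mk_eq_mk]; decide

theorem hne1x : (1 : G) ≠ x := by rw [x, Ne, eq_comm, mk_eq_one]; decide
theorem hne1y : (1 : G) ≠ y := by rw [y, Ne, eq_comm, mk_eq_one]; decide
theorem hne1z : (1 : G) ≠ z := by rw [z, Ne, eq_comm, mk_eq_one]; decide
theorem hnexy : x ≠ y := by rw [x, y, Ne, mk_eq_mk]; decide
theorem hnexz : x ≠ z := by rw [x, z, Ne, mk_eq_mk]; decide
theorem hneyz : y ≠ z := by rw [y, z, Ne, mk_eq_mk]; decide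

/-- The Klein four subgroup of `PSL₂(𝔽₅₃)` (image of the quaternion group of `SL₂(𝔽₅₃)`). -/
def Q₀ : Subgroup G where
  carrier := {1, x, y, z}
  one_mem' := Or.inl rfl
  mul_mem' := by
    intro p q hp hq
    simp only [Set.mem_insert_iff, Set.mem_singleton_iff] at *
    rcases hp with rfl | rfl | rfl | rfl <;> rcases hq with rfl | rfl | rfl | rfl <;>
      simp [hx2, hy2, hz2, hxy, hyx, hxz, hzx, hyz, hzy]
  inv_mem' := by
    intro p hp
    simp only [Set.mem_insert_iff, Set.mem_singleton_iff] at *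
    rcases hp with rfl | rfl | rfl | rfl
    · simp
    · right; left; exact inv_eq_of_mul_eq_one_right hx2
    · right; right; left; exact inv_eq_of_mul_eq_one_right hy2
    · right; right; right; exact inv_eq_of_mul_eq_one_right hz2

theorem Q₀_carrier : (Q₀ : Set G) = {1, x, y, z} := rfl

theorem card_Q₀ : Nat.card Q₀ = 4 := by
  rw [← SetLike.coe_sort_coe, Q₀_carrier, Nat.card_coe_set_eq,
    Set.ncard_insert_of_notMem (by simp [hne1x, hne1y, hne1z]),
    Set.ncard_insert_of_notMem (by simp [hnexy, hnexz]),
    Set.ncard_insert_of_notMem (by simp [hneyz]), Set.ncard_singleton]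

/-! ### Cardinality of `PSL₂(𝔽₅₃)` -/

def detHom : GL (Fin 2) F →* Fˣ := Matrix.GeneralLinearGroup.det

theorem det_surj : Function.Surjective detHom := by
  intro u
  refine ⟨Matrix.GeneralLinearGroup.mkOfDetNeZero (Matrix.diagonal ![(u : F), 1]) ?_, ?_⟩
  · rw [Matrix.det_diagonal, Fin.prod_univ_two]
    simp [u.ne_zero]
  · apply Units.ext
    show (Matrix.diagonal ![(u : F), 1]).det = (u : F)
    rw [Matrix.det_diagonal, Fin.prod_univ_two]; simp

def slEquivKer : SL ≃ detHom.ker where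
  toFun A := ⟨Matrix.SpecialLinearGroup.toGL A, by
    rw [MonoidHom.mem_ker]
    exact Units.ext A.2⟩
  invFun M := ⟨((M : GL (Fin 2) F) : Matrix (Fin 2) (Fin 2) F), by
    have := M.2
    rw [MonoidHom.mem_ker] at this
    exact congrArg Units.val this⟩
  left_inv A := Subtype.ext rfl
  right_inv M := Subtype.ext (Units.ext rfl)

theorem card_GL : Nat.card (GL (Fin 2) F) = 7738848 := by
  rw [Matrix.card_GL_field]
  simp [ZMod.card, Fin.prod_univ_two]

theorem card_units : Nat.card Fˣ = 52 := by
  rw [Nat.card_eq_fintype_card, ZMod.card_units_eq_totient]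
  norm_num [Nat.totient_prime (fact53.out)]

theorem card_SL : Nat.card SL = 148824 := by
  have h1 := Subgroup.card_eq_card_quotient_mul_card_subgroup detHom.ker
  have h2 : Nat.card (GL (Fin 2) F ⧸ detHom.ker) = 52 := by
    rw [Nat.card_congr (QuotientGroup.quotientKerEquivOfSurjective detHom det_surj).toEquiv]
    exact card_units
  have h3 : Nat.card detHom.ker = Nat.card SL := Nat.card_congr slEquivKer.symm
  rw [card_GL, h2, h3] at h1
  omega

theorem card_center : Nat.card (Subgroup.center SL) = 2 := by
  have hset : ((Subgroup.center SL : Subgroup SL) : Set SL) = {1, w} := by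
    ext A
    simp only [SetLike.mem_coe, mem_center_iff, Set.mem_insert_iff, Set.mem_singleton_iff]
  rw [← SetLike.coe_sort_coe, hset, Nat.card_coe_set_eq,
    Set.ncard_insert_of_notMem (by simp; decide), Set.ncard_singleton]

theorem card_G : Nat.card G = 74412 := by
  have h := Subgroup.card_eq_card_quotient_mul_card_subgroup (Subgroup.center SL)
  rw [card_SL, card_center] at h
  have : Nat.card G = Nat.card (SL ⧸ Subgroup.center SL) := rfl
  omega

theorem fact_G : (Nat.card G).factorization 2 = 2 := by
  rw [card_G, show (74412 : ℕ) = 2^2 * 18603 by norm_num,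
    Nat.factorization_mul (by norm_num) (by norm_num), Nat.factorization_pow]
  simp [Nat.Prime.factorization Nat.prime_two,
    Nat.factorization_eq_zero_of_not_dvd (by norm_num : ¬ 2 ∣ 18603)]

/-! ### Even order criterion and the key computation -/

theorem two_dvd_orderOf {k : G} (m : ℕ) (h1 : k ^ (2*m) = 1) (h2 : k ^ m ≠ 1) :
    2 ∣ orderOf k := by
  by_contra hnd
  have hcop : Nat.Coprime (orderOf k) 2 := ((Nat.prime_two.coprime_iff_not_dvd).mpr hnd).symm
  have hd : orderOf k ∣ m * 2 := by
    rw [mul_comm]; exact orderOf_dvd_of_pow_eq_one h1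
  exact h2 (orderOf_dvd_iff_pow_eq_one.mp (hcop.dvd_of_dvd_mul_right hd))

theorem orderOf_conj (u v : G) : orderOf (u * v * u⁻¹) = orderOf v := by
  refine (SemiconjBy.orderOf_eq u ?_).symm
  show u * v = u * v * u⁻¹ * u
  group

/-- Every element of the coset `g₀ • Q₀` has even order (in fact, order 26). -/
theorem key : ∀ q ∈ Q₀, 2 ∣ orderOf (g₀ * q) := by
  intro q hq
  rw [← SetLike.mem_coe, Q₀_carrier] at hq
  rcases hq with rfl | rfl | rfl | rfl
  · rw [mul_one]
    refine two_dvd_orderOf 13 ?_ ?_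
    · rw [g₀, ← map_pow, mk_eq_one]; decide
    · rw [g₀, Ne, ← map_pow, mk_eq_one]; decide
  · rw [g₀, x, ← _root_.map_mul]
    refine two_dvd_orderOf 13 ?_ ?_
    · rw [← map_pow, mk_eq_one]; decide
    · rw [Ne, ← map_pow, mk_eq_one]; decide
  · rw [g₀, y, ← _root_.map_mul]
    refine two_dvd_orderOf 13 ?_ ?_
    · rw [← map_pow, mk_eq_one]; decide
    · rw [Ne, ← map_pow, mk_eq_one]; decide
  · rw [g₀, z, ← _root_.map_mul]
    refine two_dvd_orderOf 13 ?_ ?_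
    · rw [← map_pow, mk_eq_one]; decide
    · rw [Ne, ← map_pow, mk_eq_one]; decide

/-- `Q₀` as a Sylow `2`-subgroup of `PSL₂(𝔽₅₃)`. -/
def Q₀Sylow : Sylow 2 G := Sylow.ofCard Q₀ (by rw [card_Q₀, fact_G]; norm_num)

end ThompsonAux

open ThompsonAux in
/-- Thompson's theorem: in `G = PSL₂(53)` there is a coset `gQ` of a Sylow `2`-subgroup
`Q` (of order `4`) all of whose elements have even order. -/
theorem thompson_PSL2_53
    (Q : Sylow 2 (Matrix.ProjectiveSpecialLinearGroup (Fin 2) (ZMod 53))) :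
    ∃ g : Matrix.ProjectiveSpecialLinearGroup (Fin 2) (ZMod 53),
      ∀ h ∈ g • ((Q : Subgroup (Matrix.ProjectiveSpecialLinearGroup (Fin 2) (ZMod 53))) :
          Set (Matrix.ProjectiveSpecialLinearGroup (Fin 2) (ZMod 53))),
        2 ∣ orderOf h := by
  obtain ⟨c, hc⟩ := MulAction.exists_smul_eq G Q₀Sylow Q
  refine ⟨c * g₀ * c⁻¹, ?_⟩
  intro h hh
  rw [← hc] at hh
  rw [Set.mem_smul_set] at hh
  obtain ⟨q, hq, rfl⟩ := hh
  rw [Sylow.coe_subgroup_smul] at hq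
  rw [SetLike.mem_coe, Subgroup.mem_pointwise_smul_iff_inv_smul_mem] at hq
  have hq' : c⁻¹ * q * c ∈ Q₀ := by
    simpa [MulAut.smul_def, Q₀Sylow] using hq
  have hrw : (c * g₀ * c⁻¹) • q = c * (g₀ * (c⁻¹ * q * c)) * c⁻¹ := by
    rw [smul_eq_mul]; group
  rw [hrw, orderOf_conj]
  exact key _ hq'
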